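/- arXiv:1707.03680 — 3 statements merged into one kernel-verified Lean document; each statement's English description precedes it below -/
import Mathlib

section
/- Let L be a p-special lattice. Then the degree n theta series of L, ϑ^n(L)(Z) = Σ_{x ∈ L^n} exp(2πi tr(q(x)Z)), has all non-constant Fourier coefficients divisible by p; equivalently every T ≠ 0 in the support has Fourier coefficient r(L,T) = #{x ∈ L^n : q(x) = T} divisible by p. -/
/-- Let `L` be a `p`-special lattice (`p` an odd prime). Then every non-constant
Fourier coefficient of the degree `n` theta series `ϑ^n(L)` is divisible by `p`:
for every `T ≠ 0`, `p` divides `r(L,T) = #{x ∈ L^n : q(x) = T}`, where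
`q(x)_{ij} = B(x_i, x_j)/2`. -/
theorem theta_series_of_p_special_lattice_congruent_one
    (p : ℕ) (hp : p.Prime) (hodd : Odd p)
    (L : Type*) [AddCommGroup L] [Module ℤ L] [Module.Free ℤ L] [Module.Finite ℤ L]
    (B : L →ₗ[ℤ] L →ₗ[ℤ] ℤ)
    (hsymm : ∀ x y : L, B x y = B y x)
    (hpos : ∀ x : L, x ≠ 0 → 0 < B x x)
    (heven : ∀ x : L, Even (B x x))
    (σ : L ≃ₗ[ℤ] L)
    (hiso : ∀ x y : L, B (σ x) (σ y) = B x y)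
    (horder : σ ^ p = 1) (hne : σ ≠ 1)
    (hfix : ∀ x : L, σ x = x → x = 0) :
    ∀ (n : ℕ) (T : Matrix (Fin n) (Fin n) ℚ), T ≠ 0 →
      p ∣ Nat.card {x : Fin n → L // ∀ i j, ((B (x i) (x j) : ℤ) : ℚ) = 2 * T i j} := by
  intro n T hT
  haveI : Fact p.Prime := ⟨hp⟩
  set S := {x : Fin n → L // ∀ i j, ((B (x i) (x j) : ℤ) : ℚ) = 2 * T i j} with hS
  by_cases hfin : Finite S
  · -- the permutation of S induced by σ
    let e : Equiv.Perm S :=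
      { toFun := fun x => ⟨fun i => σ (x.1 i), by
          intro i j; show ((B (σ (x.1 i)) (σ (x.1 j)) : ℤ) : ℚ) = 2 * T i j
          rw [hiso]; exact x.2 i j⟩
        invFun := fun x => ⟨fun i => σ.symm (x.1 i), by
          intro i j
          have h := hiso (σ.symm (x.1 i)) (σ.symm (x.1 j))
          simp only [LinearEquiv.apply_symm_apply] at h
          show ((B (σ.symm (x.1 i)) (σ.symm (x.1 j)) : ℤ) : ℚ) = 2 * T i j
          rw [← h]; exact x.2 i j⟩
        left_inv := by intro x; ext i; simp
        right_inv := by intro x; ext i; simp }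
    have hepow : ∀ (k : ℕ) (x : S) (i : Fin n), ((e ^ k) x).1 i = (σ ^ k) (x.1 i) := by
      intro k
      induction k with
      | zero => intro x i; rfl
      | succ m ih =>
        intro x i
        rw [pow_succ, pow_succ]
        show ((e ^ m) (e x)).1 i = (σ ^ m) (σ (x.1 i))
        rw [ih]
        rfl
    have hep : e ^ p = 1 := by
      ext x i
      rw [hepow, horder]
      rfl
    -- the p-group generated by e
    have hPG : IsPGroup p (Subgroup.zpowers e) := by
      intro g
      refine ⟨1, ?_⟩
      obtain ⟨k, hk⟩ := g.2
      ext : 1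
      show (g : Equiv.Perm S) ^ (p ^ 1) = 1
      rw [← hk, pow_one, ← zpow_natCast, ← zpow_mul, mul_comm, zpow_mul, zpow_natCast, hep,
        one_zpow]
    have hdvd := hPG.card_modEq_card_fixedPoints S
    -- fixed points are empty
    have hempty : IsEmpty (MulAction.fixedPoints (Subgroup.zpowers e) S) := by
      constructor
      rintro ⟨x, hx⟩
      have hex : e • x = x := hx (⟨e, Subgroup.mem_zpowers e⟩ : Subgroup.zpowers e)
      have hzero : ∀ i, x.1 i = 0 := by
        intro i
        apply hfix
        exact congrArg (fun y : S => y.1 i) hex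
      apply hT
      ext i j
      have hx2 := x.2 i j
      rw [hzero i] at hx2
      simp only [map_zero, LinearMap.zero_apply, Int.cast_zero] at hx2
      have h2 : (2 : ℚ) * T i j = 0 := hx2.symm
      rcases mul_eq_zero.mp h2 with h | h
      · norm_num at h
      · simpa using h
    haveI := hempty
    have h0 : Nat.card (MulAction.fixedPoints (Subgroup.zpowers e) S) = 0 :=
      Nat.card_of_isEmpty
    rw [h0] at hdvd
    exact Nat.modEq_zero_iff_dvd.mp hdvd
  · rw [not_finite_iff_infinite] at hfin
    rw [Nat.card_eq_zero_of_infinite]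
    exact dvd_zero p
end

section
/- An even positive definite integral matrix S of rank n with squarefree determinant corresponds to a maximal lattice: the lattice Z^n with quadratic form x ↦ (1/2) x^T S x admits no proper integral overlattice. -/
open Matrix

/-- The standard lattice `ℤ^n` inside `ℚ^n`. -/
def stdLattice (n : ℕ) : Submodule ℤ (Fin n → ℚ) :=
  Submodule.span ℤ (Set.range fun i : Fin n => (Pi.single i 1 : Fin n → ℚ))

section helpers
variable {n : ℕ} {R : Type*} [CommRing R]

lemma mulVec_map' (c : ℤ →+* R) (M : Matrix (Fin n) (Fin n) ℤ) (v : Fin n → ℤ) :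
    (M.map ⇑c).mulVec (fun i => c (v i)) = fun i => c (M.mulVec v i) := by
  funext i
  simp [Matrix.mulVec, dotProduct, Matrix.map, map_sum]

lemma dotProduct_map' (c : ℤ →+* R) (v w : Fin n → ℤ) :
    dotProduct (fun i => c (v i)) (fun i => c (w i)) = c (dotProduct v w) := by
  simp [dotProduct, map_sum]

lemma mulVec_cast {R : Type*} [CommRing R] (M : Matrix (Fin n) (Fin n) ℤ) (v : Fin n → ℤ) :
    (M.map (Int.cast : ℤ → R)).mulVec (fun i => ((v i : ℤ) : R)) =
      fun i => ((M.mulVec v i : ℤ) : R) := by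
  funext i
  simp [Matrix.mulVec, dotProduct, Matrix.map]

lemma dotProduct_cast {R : Type*} [CommRing R] (v w : Fin n → ℤ) :
    dotProduct (fun i => ((v i : ℤ) : R)) (fun i => ((w i : ℤ) : R)) =
      ((dotProduct v w : ℤ) : R) := by
  simp [dotProduct]

end helpers

lemma ker_sub_span (p : ℕ) [Fact p.Prime] {n : ℕ} (S : Matrix (Fin n) (Fin n) ℤ)
    (hsf : ¬ ((p : ℤ) * (p : ℤ) ∣ S.det))
    (m0 : Fin n → ZMod p) (hm0 : m0 ≠ 0)
    (hSm : (S.map (Int.cast : ℤ → ZMod p)).mulVec m0 = 0)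
    (x : Fin n → ZMod p) (hx : (S.map (Int.cast : ℤ → ZMod p)).mulVec x = 0) :
    ∃ a : ZMod p, x = a • m0 := by
  by_contra hcon
  push_neg at hcon
  have hp := (Fact.out : p.Prime)
  have hli : LinearIndependent (ZMod p) ![x, m0] := by
    rw [linearIndependent_fin2]
    exact ⟨hm0, fun a ha => hcon a ha.symm⟩
  classical
  have hs : LinearIndepOn (ZMod p) id (Set.range ![x, m0]) :=
    (linearIndepOn_id_range_iff hli.injective).mpr hli
  let b : Module.Basis _ (ZMod p) (Fin n → ZMod p) := Module.Basis.extend hs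
  have : FiniteDimensional (ZMod p) (Fin n → ZMod p) := by infer_instance
  have : Fintype ↥(hs.extend (Set.subset_univ _)) := FiniteDimensional.fintypeBasisIndex b
  have hcard : Fintype.card ↥(hs.extend (Set.subset_univ _)) = n := by
    have := Module.finrank_eq_card_basis b
    simpa using this.symm
  let g := Fintype.equivFinOfCardEq hcard
  have hmem_x : x ∈ hs.extend (Set.subset_univ _) :=
    hs.subset_extend _ ⟨0, rfl⟩
  have hmem_m : m0 ∈ hs.extend (Set.subset_univ _) :=
    hs.subset_extend _ ⟨1, rfl⟩
  set j1 : Fin n := g ⟨m0, hmem_m⟩ with hj1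
  set j2 : Fin n := g ⟨x, hmem_x⟩ with hj2
  have hxm : x ≠ m0 := by
    intro h
    exact hcon 1 (by rw [one_smul, h])
  have hj12 : j1 ≠ j2 := by
    intro h
    apply hxm
    have := g.injective (hj2 ▸ hj1 ▸ h)
    exact congrArg Subtype.val this.symm
  -- the matrix over ZMod p whose columns are the basis vectors
  let B : Matrix (Fin n) (Fin n) (ZMod p) := fun i j => b (g.symm j) i
  have hBcol : ∀ j, (fun i => B i j) = (b (g.symm j) : Fin n → ZMod p) := fun j => rfl
  have hBdet : B.det ≠ 0 := by
    have hBeq : B = (Pi.basisFun (ZMod p) (Fin n)).toMatrix ⇑(b.reindex g) := by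
      ext i j
      simp [B, Module.Basis.toMatrix_apply, Pi.basisFun_repr, Module.Basis.reindex_apply]
    have : Invertible ((Pi.basisFun (ZMod p) (Fin n)).toMatrix ⇑(b.reindex g)) :=
      (Pi.basisFun (ZMod p) (Fin n)).invertibleToMatrix (b.reindex g)
    rw [hBeq]
    exact (Matrix.isUnit_iff_isUnit_det _).1 (isUnit_of_invertible _) |>.ne_zero
  -- lift B to an integer matrix U
  let U : Matrix (Fin n) (Fin n) ℤ := fun i j => (ZMod.cast (B i j) : ℤ)
  have hUmap : U.map (Int.cast : ℤ → ZMod p) = B := by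
    ext i j
    simp [U, Matrix.map, ZMod.intCast_zmod_cast]
  have hUdet : ¬ ((p : ℤ) ∣ U.det) := by
    rw [← ZMod.intCast_zmod_eq_zero_iff_dvd]
    have hh := (Int.castRingHom (ZMod p)).map_det U
    have : ((U.det : ℤ) : ZMod p) = (U.map (Int.cast : ℤ → ZMod p)).det := hh
    rw [this, hUmap]
    exact hBdet
  -- the two special columns of S * U are divisible by p
  have hcol : ∀ (j : Fin n) (v : Fin n → ZMod p),
      ((fun i => (U i j : ZMod p)) = v) →
      (S.map (Int.cast : ℤ → ZMod p)).mulVec v = 0 →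
      ∀ i, (p : ℤ) ∣ (S * U) i j := by
    intro j v hv h0 i
    rw [← ZMod.intCast_zmod_eq_zero_iff_dvd]
    have : ((S * U) i j : ZMod p) = ((S.map (Int.cast : ℤ → ZMod p)).mulVec v) i := by
      rw [← hv]
      simp [Matrix.mul_apply, Matrix.mulVec, dotProduct, Matrix.map]
    rw [this, h0]
    rfl
  have hvj1 : (fun i => ((U i j1 : ℤ) : ZMod p)) = m0 := by
    funext i
    have : ((U i j1 : ℤ) : ZMod p) = B i j1 := by
      simp [U, ZMod.intCast_zmod_cast]
    rw [this]
    show b (g.symm j1) i = m0 i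
    have e1 : g.symm j1 = ⟨m0, hmem_m⟩ := by rw [hj1]; exact Equiv.symm_apply_apply _ _
    rw [e1]
    exact congrFun (Module.Basis.extend_apply_self hs ⟨m0, hmem_m⟩) i
  have hvj2 : (fun i => ((U i j2 : ℤ) : ZMod p)) = x := by
    funext i
    have : ((U i j2 : ℤ) : ZMod p) = B i j2 := by
      simp [U, ZMod.intCast_zmod_cast]
    rw [this]
    show b (g.symm j2) i = x i
    have e2 : g.symm j2 = ⟨x, hmem_x⟩ := by rw [hj2]; exact Equiv.symm_apply_apply _ _
    rw [e2]
    exact congrFun (Module.Basis.extend_apply_self hs ⟨x, hmem_x⟩) i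
  have hd1 : ∀ i, (p : ℤ) ∣ (S * U) i j1 := hcol j1 m0 hvj1 hSm
  have hd2 : ∀ i, (p : ℤ) ∣ (S * U) i j2 := hcol j2 x hvj2 hx
  -- factor p out of the two columns
  choose c1 hc1 using hd1
  choose c2 hc2 using hd2
  set M : Matrix (Fin n) (Fin n) ℤ := S * U with hM
  have hM1 : M = M.updateCol j1 ((p : ℤ) • c1) := by
    rw [show ((p : ℤ) • c1) = fun i => M i j1 from funext fun i => (hc1 i).symm]
    exact (Matrix.updateCol_eq_self M j1).symm
  set M1 : Matrix (Fin n) (Fin n) ℤ := M.updateCol j1 c1 with hM1def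
  have hM2 : M1 = M1.updateCol j2 ((p : ℤ) • c2) := by
    have : ((p : ℤ) • c2) = fun i => M1 i j2 := by
      funext i
      rw [hM1def, Matrix.updateCol_apply, if_neg hj12.symm]
      exact (hc2 i).symm
    rw [this]
    exact (Matrix.updateCol_eq_self M1 j2).symm
  have hdetM : M.det = (p : ℤ) * ((p : ℤ) * (M1.updateCol j2 c2).det) := by
    calc M.det = (M.updateCol j1 ((p : ℤ) • c1)).det := by rw [← hM1]
    _ = (p : ℤ) * M1.det := by rw [Matrix.det_updateCol_smul]
    _ = (p : ℤ) * ((p : ℤ) * (M1.updateCol j2 c2).det) := by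
        rw [hM2, Matrix.det_updateCol_smul]
        rw [← hM2]
  have hdetSU : S.det * U.det = (p : ℤ) * ((p : ℤ) * (M1.updateCol j2 c2).det) := by
    rw [← Matrix.det_mul, ← hM, hdetM]
  -- derive p*p ∣ det S
  have hpZ : Prime (p : ℤ) := Nat.prime_iff_prime_int.1 hp
  have hpd : (p : ℤ) ∣ S.det := by
    have : (p : ℤ) ∣ S.det * U.det := ⟨_, hdetSU⟩
    rcases hpZ.dvd_mul.1 this with h | h
    · exact h
    · exact absurd h hUdet
  obtain ⟨e, he⟩ := hpd
  have hpe : (p : ℤ) ∣ e * U.det := by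
    have : (p : ℤ) * (e * U.det) = (p : ℤ) * ((p : ℤ) * (M1.updateCol j2 c2).det) := by
      rw [← mul_assoc, ← he, hdetSU]
    have := mul_left_cancel₀ (by exact_mod_cast hp.ne_zero) this
    exact ⟨_, this⟩
  have : (p : ℤ) ∣ e := by
    rcases hpZ.dvd_mul.1 hpe with h | h
    · exact h
    · exact absurd h hUdet
  exact hsf (by rw [he]; exact mul_dvd_mul_left _ this)

lemma core_lemma (p : ℕ) (hp : p.Prime) {n : ℕ} (S : Matrix (Fin n) (Fin n) ℤ)
    (hsymm : Sᵀ = S) (hsf : Squarefree S.det)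
    (m w : Fin n → ℤ) (hmw : S.mulVec m = (p : ℤ) • w)
    (k : ℤ) (hq : dotProduct m (S.mulVec m) = 2 * k * (p : ℤ) ^ 2) :
    ∀ i, (p : ℤ) ∣ m i := by
  haveI : Fact p.Prime := ⟨hp⟩
  by_contra hcon
  push_neg at hcon
  obtain ⟨i0, hi0⟩ := hcon
  classical
  set c : ℤ →+* ZMod p := Int.castRingHom (ZMod p) with hc
  set Sb : Matrix (Fin n) (Fin n) (ZMod p) := S.map (Int.cast : ℤ → ZMod p) with hSb
  set mb : Fin n → ZMod p := fun i => ((m i : ℤ) : ZMod p) with hmb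
  have hmb0 : mb ≠ 0 := by
    intro h
    apply hi0
    rw [← ZMod.intCast_zmod_eq_zero_iff_dvd]
    exact congrFun h i0
  have hpZ : Prime (p : ℤ) := Nat.prime_iff_prime_int.1 hp
  have hp0 : (p : ℤ) ≠ 0 := by exact_mod_cast hp.ne_zero
  -- mb is in the kernel of Sb
  have hSmb : Sb.mulVec mb = 0 := by
    have h1 := mulVec_map' c S m
    rw [hmw] at h1
    have : (fun i => c (((p : ℤ) • w) i)) = 0 := by
      funext i
      simp [c, ZMod.intCast_zmod_eq_zero_iff_dvd, Dvd.intro (w i) rfl]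
    rw [this] at h1
    exact h1
  -- p divides det S, p^2 does not
  have hp2 : ¬ ((p : ℤ) * (p : ℤ) ∣ S.det) := by
    intro h
    exact hpZ.not_unit (hsf _ h)
  have hdet0 : ((S.det : ℤ) : ZMod p) = 0 := by
    have hex : ∃ v ≠ 0, Sb.mulVec v = 0 := ⟨mb, hmb0, hSmb⟩
    have := (Matrix.exists_mulVec_eq_zero_iff.1 hex)
    have hh : ((S.det : ℤ) : ZMod p) = Sb.det := by
      have := c.map_det S
      exact this
    rw [hh, this]
  have hpd : (p : ℤ) ∣ S.det := (ZMod.intCast_zmod_eq_zero_iff_dvd _ _).1 hdet0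
  obtain ⟨e, he⟩ := hpd
  have hpe : ¬ ((p : ℤ) ∣ e) := fun h => hp2 (by rw [he]; exact mul_dvd_mul_left _ h)
  -- dot product relation: m ⬝ w = 2 k p
  have hmwdot : dotProduct m w = 2 * k * (p : ℤ) := by
    have : dotProduct m (S.mulVec m) = (p : ℤ) * dotProduct m w := by
      rw [hmw, dotProduct_smul]; rfl
    rw [this] at hq
    apply mul_left_cancel₀ hp0
    rw [hq]; ring
  -- kernel of Sb is spanned by mb
  set Slin : (Fin n → ZMod p) →ₗ[ZMod p] (Fin n → ZMod p) := Sb.mulVecLin with hSlin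
  have hker : LinearMap.ker Slin = Submodule.span (ZMod p) {mb} := by
    apply le_antisymm
    · intro x hx
      obtain ⟨a, ha⟩ := ker_sub_span p S hp2 mb hmb0 hSmb x hx
      rw [Submodule.mem_span_singleton]
      exact ⟨a, ha.symm⟩
    · rw [Submodule.span_le, Set.singleton_subset_iff]
      exact hSmb
  -- the functional x ↦ mb ⬝ x
  set f : (Fin n → ZMod p) →ₗ[ZMod p] (ZMod p) :=
    { toFun := fun x => dotProduct mb x
      map_add' := fun a b => dotProduct_add mb a b
      map_smul' := fun r a => dotProduct_smul r mb a } with hf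
  obtain ⟨i1, hi1⟩ : ∃ i, mb i ≠ 0 := by
    by_contra h
    push_neg at h
    exact hmb0 (funext h)
  have hfsurj : Function.Surjective f := by
    intro a
    refine ⟨(a * (mb i1)⁻¹) • (Pi.single i1 1 : Fin n → ZMod p), ?_⟩
    show dotProduct mb ((a * (mb i1)⁻¹) • (Pi.single i1 1 : Fin n → ZMod p)) = a
    rw [dotProduct_smul]
    rw [dotProduct_single]
    simp only [smul_eq_mul]
    field_simp
  have hrangef : LinearMap.range f = ⊤ := LinearMap.range_eq_top.2 hfsurj
  have hfinV : Module.finrank (ZMod p) (Fin n → ZMod p) = n := by simp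
  have hrn1 := LinearMap.finrank_range_add_finrank_ker Slin
  have hrn2 := LinearMap.finrank_range_add_finrank_ker f
  have hkerdim : Module.finrank (ZMod p) (LinearMap.ker Slin) = 1 := by
    rw [hker]
    exact finrank_span_singleton hmb0
  have hrangefdim : Module.finrank (ZMod p) (LinearMap.range f) = 1 := by
    rw [hrangef]
    simp
  have hrange_le : LinearMap.range Slin ≤ LinearMap.ker f := by
    rintro _ ⟨y, rfl⟩
    show dotProduct mb (Slin y) = 0
    have h1 : Slin y = Sb.mulVec y := rfl
    rw [h1, dotProduct_mulVec]
    have h2 : Matrix.vecMul mb Sb = Sb.mulVec mb := by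
      have hSbT : Sbᵀ = Sb := by
        rw [hSb, ← Matrix.transpose_map, hsymm]
      rw [← Matrix.vecMul_transpose, hSbT]
    rw [h2, hSmb]
    exact zero_dotProduct y
  have hrange_eq : LinearMap.range Slin = LinearMap.ker f := by
    apply Submodule.eq_of_le_of_finrank_le hrange_le
    rw [hfinV] at hrn1 hrn2
    omega
  -- w mod p lies in the range of Sb
  have hwker : (fun i => ((w i : ℤ) : ZMod p)) ∈ LinearMap.ker f := by
    show dotProduct mb (fun i => ((w i : ℤ) : ZMod p)) = 0
    rw [hmb]
    rw [dotProduct_cast m w]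
    rw [hmwdot]
    push_cast
    simp
  rw [← hrange_eq] at hwker
  obtain ⟨u, hu⟩ := hwker
  -- lift u to an integer vector
  set u' : Fin n → ℤ := fun i => (ZMod.cast (u i) : ℤ) with hu'
  have hu'c : (fun i => ((u' i : ℤ) : ZMod p)) = u := by
    funext i
    exact ZMod.intCast_zmod_cast (u i)
  have hdvd : ∀ i, (p : ℤ) ∣ (S.mulVec u' i - w i) := by
    intro i
    rw [← ZMod.intCast_zmod_eq_zero_iff_dvd]
    push_cast
    have h1 : ((S.mulVec u' i : ℤ) : ZMod p) = Sb.mulVec u i := by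
      rw [← hu'c]
      exact (congrFun (mulVec_cast S u') i).symm
    have h2 : Sb.mulVec u i = ((w i : ℤ) : ZMod p) := by
      have : Slin u = Sb.mulVec u := rfl
      rw [← this, hu]
    rw [h1, h2]
    ring
  choose v hv using hdvd
  -- key computation with the adjugate
  have hkey : ∀ z : Fin n → ℤ,
      (S.adjugate).mulVec (S.mulVec z) = S.det • z := by
    intro z
    rw [Matrix.mulVec_mulVec, Matrix.adjugate_mul, Matrix.smul_mulVec, Matrix.one_mulVec]
  have hSz : S.mulVec (m - (p : ℤ) • u') = (-(p : ℤ)^2) • v := by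
    funext i
    have h1 : S.mulVec (m - (p : ℤ) • u') i
        = S.mulVec m i - (p : ℤ) * S.mulVec u' i := by
      rw [Matrix.mulVec_sub]
      have : S.mulVec ((p : ℤ) • u') = (p : ℤ) • S.mulVec u' := by
        rw [Matrix.mulVec_smul]
      rw [this]
      rfl
    rw [h1, hmw]
    have h2 : S.mulVec u' i = w i + (p : ℤ) * v i := by
      have := hv i; omega
    rw [h2]
    show (p : ℤ) * w i - (p : ℤ) * (w i + (p : ℤ) * v i) = (-(p : ℤ)^2) * v i
    ring
  have hfinal := hkey (m - (p : ℤ) • u')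
  rw [hSz] at hfinal
  have hfin_i0 := congrFun hfinal i0
  have hAv : S.adjugate.mulVec ((-(p : ℤ)^2) • v) i0 = (-(p : ℤ)^2) * S.adjugate.mulVec v i0 := by
    rw [Matrix.mulVec_smul]
    rfl
  rw [hAv] at hfin_i0
  have hrhs : (S.det • (m - (p : ℤ) • u')) i0 = (p : ℤ) * (e * (m i0 - (p : ℤ) * u' i0)) := by
    show S.det * (m i0 - (p : ℤ) * u' i0) = (p : ℤ) * (e * (m i0 - (p : ℤ) * u' i0))
    rw [he]; ring
  rw [hrhs] at hfin_i0
  have hcancel : e * (m i0 - (p : ℤ) * u' i0) = -(p : ℤ) * S.adjugate.mulVec v i0 := by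
    apply mul_left_cancel₀ hp0
    rw [← hfin_i0]; ring
  have : (p : ℤ) ∣ e * m i0 := by
    have : e * m i0 = -(p : ℤ) * S.adjugate.mulVec v i0 + (p : ℤ) * (e * u' i0) := by
      rw [← hcancel]; ring
    rw [this]
    exact dvd_add ⟨-(S.adjugate.mulVec v i0), by ring⟩ ⟨e * u' i0, rfl⟩
  rcases hpZ.dvd_mul.1 this with h | h
  · exact hpe h
  · exact hi0 h

lemma mem_stdLattice_iff {n : ℕ} (v : Fin n → ℚ) :
    v ∈ stdLattice n ↔ ∃ a : Fin n → ℤ, v = fun i => (a i : ℚ) := by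
  constructor
  · intro hv
    induction hv using Submodule.span_induction with
    | mem x hx =>
      obtain ⟨i, rfl⟩ := hx
      refine ⟨Pi.single i 1, ?_⟩
      funext j
      simp [Pi.single_apply, apply_ite]
    | zero => exact ⟨0, by funext j; simp⟩
    | add x y _ _ hx hy =>
      obtain ⟨a, rfl⟩ := hx
      obtain ⟨b, rfl⟩ := hy
      exact ⟨a + b, by funext j; push_cast; simp⟩
    | smul r x _ hx =>
      obtain ⟨a, rfl⟩ := hx
      refine ⟨r • a, ?_⟩
      funext j
      show r • ((a j : ℚ)) = ((r * a j : ℤ) : ℚ)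
      rw [zsmul_eq_mul]
      push_cast
      ring
  · rintro ⟨a, rfl⟩
    have : (fun i => (a i : ℚ)) = ∑ i : Fin n, a i • (Pi.single i 1 : Fin n → ℚ) := by
      funext j
      rw [Finset.sum_apply]
      simp [Pi.single_apply, apply_ite]
    rw [this]
    exact Submodule.sum_mem _ fun i _ =>
      Submodule.smul_mem _ _ (Submodule.subset_span ⟨i, rfl⟩)

lemma stepA {n : ℕ} (S : Matrix (Fin n) (Fin n) ℤ) (hsymm : Sᵀ = S)
    (L' : Submodule ℤ (Fin n → ℚ)) (hle : stdLattice n ≤ L')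
    (hq : ∀ y ∈ L', ∃ k : ℤ,
      dotProduct y ((S.map (Int.cast : ℤ → ℚ)).mulVec y) = 2 * (k : ℚ))
    (y : Fin n → ℚ) (hy : y ∈ L') :
    ∃ a : Fin n → ℤ, (S.map (Int.cast : ℤ → ℚ)).mulVec y = fun i => (a i : ℚ) := by
  set Sq := S.map (Int.cast : ℤ → ℚ) with hSq
  have hSqT : Sqᵀ = Sq := by rw [hSq, ← Matrix.transpose_map, hsymm]
  have hsymmB : ∀ u v : Fin n → ℚ,
      dotProduct u (Sq.mulVec v) = dotProduct v (Sq.mulVec u) := by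
    intro u v
    rw [dotProduct_mulVec]
    rw [show Matrix.vecMul u Sq = Sq.mulVec u by rw [← Matrix.vecMul_transpose, hSqT]]
    exact dotProduct_comm _ _
  have key : ∀ i : Fin n, ∃ a : ℤ, (Sq.mulVec y) i = a := by
    intro i
    have hei : (Pi.single i 1 : Fin n → ℚ) ∈ L' := hle (Submodule.subset_span ⟨i, rfl⟩)
    obtain ⟨k1, hk1⟩ := hq _ (L'.add_mem hy hei)
    obtain ⟨k2, hk2⟩ := hq _ hy
    obtain ⟨k3, hk3⟩ := hq _ hei
    have hexp : dotProduct (y + Pi.single i 1) (Sq.mulVec (y + Pi.single i 1))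
        = dotProduct y (Sq.mulVec y)
          + 2 * dotProduct (Pi.single i 1 : Fin n → ℚ) (Sq.mulVec y)
          + dotProduct (Pi.single i 1 : Fin n → ℚ)
              (Sq.mulVec (Pi.single i 1 : Fin n → ℚ)) := by
      rw [Matrix.mulVec_add, add_dotProduct,
        dotProduct_add, dotProduct_add,
        hsymmB y (Pi.single i 1)]
      ring
    have hsingle : dotProduct (Pi.single i 1 : Fin n → ℚ) (Sq.mulVec y)
        = (Sq.mulVec y) i := by
      rw [single_dotProduct]
      ring
    rw [hk1, hk2, hk3, hsingle] at hexp
    exact ⟨k1 - k2 - k3, by push_cast; linarith⟩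
  choose a ha using key
  exact ⟨a, funext ha⟩

lemma descent {n : ℕ} (S : Matrix (Fin n) (Fin n) ℤ) (hsymm : Sᵀ = S)
    (hsf : Squarefree S.det)
    (L' : Submodule ℤ (Fin n → ℚ)) (hle : stdLattice n ≤ L')
    (hq : ∀ y ∈ L', ∃ k : ℤ,
      dotProduct y ((S.map (Int.cast : ℤ → ℚ)).mulVec y) = 2 * (k : ℚ)) :
    ∀ t : ℕ, 0 < t → ∀ y ∈ L',
      (∃ a : Fin n → ℤ, (t : ℚ) • y = fun i => (a i : ℚ)) → y ∈ stdLattice n := by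
  intro t
  induction t using Nat.strong_induction_on with
  | _ t IH =>
    intro ht y hy ⟨a, ha⟩
    rcases eq_or_lt_of_le (Nat.one_le_iff_ne_zero.2 ht.ne') with h1 | h1
    · -- t = 1
      rw [mem_stdLattice_iff]
      refine ⟨a, ?_⟩
      rw [← ha, ← h1]
      simp
    · -- t > 1 : use the minimal prime factor
      set p := t.minFac with hpdef
      have hp : p.Prime := Nat.minFac_prime (by omega)
      obtain ⟨s, hs⟩ : p ∣ t := t.minFac_dvd
      have hs0 : 0 < s := by
        rcases Nat.eq_zero_or_pos s with h | h
        · subst h; rw [Nat.mul_zero] at hs; omega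
        · exact h
      have hst : s < t := by
        have := hp.two_le
        calc s < 2 * s := by omega
        _ ≤ p * s := Nat.mul_le_mul_right s this
        _ = t := hs.symm
      set Sq := S.map (Int.cast : ℤ → ℚ) with hSq
      -- the vector z = s • y
      have hz : ((s : ℚ)) • y ∈ L' := by
        have h2 : ((s : ℤ)) • y ∈ L' := L'.smul_mem _ hy
        have h3 : ((s : ℤ)) • y = ((s : ℚ)) • y := by
          funext i
          show ((s : ℤ)) • y i = ((s : ℚ)) * y i
          rw [zsmul_eq_mul]
          push_cast
          ring
        rwa [h3] at h2
      set z : Fin n → ℚ := ((s : ℚ)) • y with hzdef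
      have hpz : ((p : ℚ)) • z = fun i => (a i : ℚ) := by
        rw [hzdef, smul_smul, ← ha, ← Nat.cast_mul, ← hs]
      -- the image S z is integral
      obtain ⟨w', hw'⟩ := stepA S hsymm L' hle hq z hz
      -- integral relation  S a = p • w'
      have hSa : S.mulVec a = (p : ℤ) • w' := by
        have hcast : (fun i => ((S.mulVec a i : ℤ) : ℚ)) = fun i => (((p : ℤ) • w') i : ℚ) := by
          rw [← mulVec_cast S a, ← ha]
          have : Sq.mulVec ((t : ℚ) • y) = (t : ℚ) • Sq.mulVec y := Matrix.mulVec_smul Sq _ y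
          rw [this]
          have hty : (t : ℚ) • y = ((p : ℚ)) • z := by rw [hpz, ha]
          have : (t : ℚ) • Sq.mulVec y = ((p : ℚ)) • Sq.mulVec z := by
            rw [← Matrix.mulVec_smul, ← Matrix.mulVec_smul, hty]
          rw [this, hw']
          funext i
          show (p : ℚ) * (w' i : ℚ) = (((p : ℤ) * w' i : ℤ) : ℚ)
          push_cast
          ring
        funext i
        have := congrFun hcast i
        exact_mod_cast this
      -- the quadratic value
      obtain ⟨k, hk⟩ := hq z hz
      have hqa : dotProduct a (S.mulVec a) = 2 * k * (p : ℤ) ^ 2 := by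
        have hcast : ((dotProduct a (S.mulVec a) : ℤ) : ℚ)
            = ((2 * k * (p : ℤ) ^ 2 : ℤ) : ℚ) := by
          rw [← dotProduct_cast a (S.mulVec a), ← mulVec_cast S a, ← ha]
          have hty : (t : ℚ) • y = ((p : ℚ)) • z := by rw [hpz, ha]
          rw [hty]
          rw [Matrix.mulVec_smul, smul_dotProduct, dotProduct_smul]
          rw [hk]
          push_cast
          simp only [smul_eq_mul]
          ring
        exact_mod_cast hcast
      have hdvd := core_lemma p hp S hsymm hsf a w' hSa k hqa
      choose b hb using hdvd
      have hsy : ((s : ℚ)) • y = fun i => (b i : ℚ) := by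
        funext i
        have h4 := congrFun hpz i
        have h5 : ((p : ℚ)) * z i = (a i : ℚ) := h4
        have h6 : (a i : ℚ) = (p : ℚ) * (b i : ℚ) := by
          rw [hb i]
          push_cast
          ring
        have hp0 : (p : ℚ) ≠ 0 := by
          exact_mod_cast hp.ne_zero
        have := mul_left_cancel₀ hp0 (h5.trans h6)
        exact this
      exact IH s hst hs0 y hy ⟨b, hsy⟩

theorem squarefree_det_is_maximal_aux
    (n : ℕ) (S : Matrix (Fin n) (Fin n) ℤ)
    (hsymm : Sᵀ = S)
    (heven : ∀ i, Even (S i i))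
    (hpos : ∀ v : Fin n → ℚ, v ≠ 0 →
      0 < dotProduct v ((S.map (Int.cast : ℤ → ℚ)).mulVec v))
    (hsf : Squarefree S.det) :
    ∀ L' : Submodule ℤ (Fin n → ℚ), stdLattice n ≤ L' →
      (∀ y ∈ L', ∃ k : ℤ,
        dotProduct y ((S.map (Int.cast : ℤ → ℚ)).mulVec y) = 2 * (k : ℚ)) →
      L' = stdLattice n := by
  intro L' hle hq
  refine le_antisymm ?_ hle
  intro y hy
  have hd0 : S.det ≠ 0 := by
    intro h
    rw [h] at hsf
    exact not_squarefree_zero hsf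
  set Sq := S.map (Int.cast : ℤ → ℚ) with hSq
  -- S.det • y is integral
  obtain ⟨w', hw'⟩ := stepA S hsymm L' hle hq y hy
  have hdy : ((S.det : ℚ)) • y = fun i => ((S.adjugate.mulVec w' i : ℤ) : ℚ) := by
    have h1 : Sq.adjugate.mulVec (Sq.mulVec y) = Sq.det • y := by
      rw [Matrix.mulVec_mulVec, Matrix.adjugate_mul, Matrix.smul_mulVec,
        Matrix.one_mulVec]
    have h2 : Sq.det = ((S.det : ℤ) : ℚ) := by
      have := (Int.castRingHom ℚ).map_det S
      exact this.symm
    have h3 : Sq.adjugate = S.adjugate.map (Int.cast : ℤ → ℚ) := by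
      have := (Int.castRingHom ℚ).map_adjugate S
      exact this.symm
    rw [h2] at h1
    rw [← h1, h3, hw']
    exact mulVec_cast (R := ℚ) S.adjugate w'
  -- convert to a ℕ multiple
  set t : ℕ := S.det.natAbs with htdef
  have ht0 : 0 < t := Int.natAbs_pos.2 hd0
  have hty : ∃ a : Fin n → ℤ, (t : ℚ) • y = fun i => (a i : ℚ) := by
    rcases Int.natAbs_eq S.det with h | h
    · refine ⟨S.adjugate.mulVec w', ?_⟩
      funext i
      have h6 := congrFun hdy i
      show (t : ℚ) * y i = _
      have h7 : ((S.det : ℚ)) * y i = ((S.adjugate.mulVec w' i : ℤ) : ℚ) := h6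
      rw [h, Int.cast_natCast] at h7
      exact h7
    · refine ⟨-(S.adjugate.mulVec w'), ?_⟩
      funext i
      have h6 := congrFun hdy i
      show (t : ℚ) * y i = _
      have h7 : ((S.det : ℚ)) * y i = ((S.adjugate.mulVec w' i : ℤ) : ℚ) := h6
      rw [h] at h7
      show (t : ℚ) * y i = ((-(S.adjugate.mulVec w' i) : ℤ) : ℚ)
      rw [Int.cast_neg, Int.cast_natCast] at h7
      push_cast
      linarith
  exact descent S hsymm hsf L' hle hq t ht0 y hy hty

/-- An even positive definite integral matrix `S` of rank `n` with squarefree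
determinant corresponds to a maximal lattice: the lattice `ℤ^n` with quadratic form
`x ↦ (1/2) xᵀ S x` admits no proper integral overlattice. -/
theorem squarefree_det_is_maximal
    (n : ℕ) (S : Matrix (Fin n) (Fin n) ℤ)
    (hsymm : Sᵀ = S)
    (heven : ∀ i, Even (S i i))
    (hpos : ∀ v : Fin n → ℚ, v ≠ 0 →
      0 < dotProduct v ((S.map (Int.cast : ℤ → ℚ)).mulVec v))
    (hsf : Squarefree S.det) :
    ∀ L' : Submodule ℤ (Fin n → ℚ), stdLattice n ≤ L' →
      (∀ y ∈ L', ∃ k : ℤ,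
        dotProduct y ((S.map (Int.cast : ℤ → ℚ)).mulVec y) = 2 * (k : ℚ)) →
      L' = stdLattice n := by
  exact squarefree_det_is_maximal_aux n S hsymm heven hpos hsf
end

section
/- Let p be a prime with p ≡ 3 mod 4, p > 3. The set B_{−p}/SL(2,Z) of SL(2,Z)-classes of positive definite integral binary quadratic forms of discriminant −p contains exactly one ambiguous class, i.e. exactly one class fixed under the GL(2,Z)-action by an element of determinant −1. -/
open Matrix

/-- Positive definiteness of the binary quadratic form `ax² + bxy + cy²`. -/
def PosDefBQF (a b c : ℤ) : Prop :=
  ∀ x y : ℚ, ¬(x = 0 ∧ y = 0) → 0 < (a : ℚ) * x ^ 2 + (b : ℚ) * x * y + (c : ℚ) * y ^ 2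

/-- The even Gram matrix of the binary quadratic form `ax² + bxy + cy²`. -/
def gram (a b c : ℤ) : Matrix (Fin 2) (Fin 2) ℤ := !![2 * a, b; b, 2 * c]

/-- Membership in `B_{-p}`: positive definite integral binary forms of
discriminant `-p`. -/
def InBD (p : ℕ) (f : ℤ × ℤ × ℤ) : Prop :=
  PosDefBQF f.1 f.2.1 f.2.2 ∧ f.2.1 ^ 2 - 4 * f.1 * f.2.2 = -(p : ℤ)

/-- Proper (`SL(2,ℤ)`) equivalence of binary quadratic forms. -/
def SL2Equiv (f g : ℤ × ℤ × ℤ) : Prop :=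
  ∃ U : Matrix.SpecialLinearGroup (Fin 2) ℤ,
    (U : Matrix (Fin 2) (Fin 2) ℤ)ᵀ * gram f.1 f.2.1 f.2.2 * (U : Matrix (Fin 2) (Fin 2) ℤ) =
      gram g.1 g.2.1 g.2.2

/-- A form is ambiguous iff its class coincides with its image under a determinant
`-1` change of variables, i.e. the form admits an improper automorphism. -/
def Ambiguous (f : ℤ × ℤ × ℤ) : Prop :=
  ∃ U : Matrix (Fin 2) (Fin 2) ℤ, U.det = -1 ∧
    Uᵀ * gram f.1 f.2.1 f.2.2 * U = gram f.1 f.2.1 f.2.2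

/- ## auxiliary lemmas -/

lemma transform (a b c r s t u : ℤ) :
    (!![r, s; t, u])ᵀ * _root_.gram a b c * !![r, s; t, u] =
      _root_.gram (a*r^2 + b*r*t + c*t^2) (2*a*r*s + b*(r*u + s*t) + 2*c*t*u)
        (a*s^2 + b*s*u + c*u^2) := by
  ext i j
  fin_cases i <;> fin_cases j <;>
    simp [_root_.gram, Matrix.mul_apply, Fin.sum_univ_two, Matrix.transpose_apply,
      Matrix.vecHead, Matrix.vecTail] <;> ring

lemma transform' {a b c r s t u A B C : ℤ}
    (h1 : A = a*r^2 + b*r*t + c*t^2) (h2 : B = 2*a*r*s + b*(r*u + s*t) + 2*c*t*u)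
    (h3 : C = a*s^2 + b*s*u + c*u^2) :
    (!![r, s; t, u])ᵀ * _root_.gram a b c * !![r, s; t, u] = _root_.gram A B C := by
  rw [h1, h2, h3]; exact transform a b c r s t u

lemma gram_inj {a b c a' b' c' : ℤ} (h : _root_.gram a b c = _root_.gram a' b' c') :
    a = a' ∧ b = b' ∧ c = c' := by
  have h00 := congrFun (congrFun h 0) 0
  have h01 := congrFun (congrFun h 0) 1
  have h11 := congrFun (congrFun h 1) 1
  simp [_root_.gram] at h00 h01 h11
  exact ⟨by omega, h01, by omega⟩

lemma sl2equiv_of {a b c A B C : ℤ} (r s t u : ℤ) (hdet : r*u - s*t = 1)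
    (h1 : A = a*r^2 + b*r*t + c*t^2) (h2 : B = 2*a*r*s + b*(r*u + s*t) + 2*c*t*u)
    (h3 : C = a*s^2 + b*s*u + c*u^2) :
    SL2Equiv (a, b, c) (A, B, C) := by
  refine ⟨⟨!![r, s; t, u], by rw [Matrix.det_fin_two_of]; linarith⟩, ?_⟩
  exact transform' h1 h2 h3

lemma mul_conj (M N G : Matrix (Fin 2) (Fin 2) ℤ) :
    (M*N)ᵀ * G * (M*N) = Nᵀ * (Mᵀ * G * M) * N := by
  simp only [Matrix.transpose_mul, Matrix.mul_assoc]

lemma conj_eq {M N G : Matrix (Fin 2) (Fin 2) ℤ} (h : M*N = 1) :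
    Nᵀ * (Mᵀ * G * M) * N = G := by
  rw [← mul_conj, h]; simp

lemma sl2equiv_symm {f g : ℤ × ℤ × ℤ} (h : SL2Equiv f g) : SL2Equiv g f := by
  obtain ⟨U, hU⟩ := h
  refine ⟨U⁻¹, ?_⟩
  have h2 : ((U * U⁻¹ : Matrix.SpecialLinearGroup (Fin 2) ℤ) : Matrix (Fin 2) (Fin 2) ℤ) = 1 := by
    rw [mul_inv_cancel]; rfl
  rw [Matrix.SpecialLinearGroup.coe_mul] at h2
  rw [← hU]
  exact conj_eq h2

lemma sl2equiv_trans {f g h : ℤ × ℤ × ℤ} (h1 : SL2Equiv f g) (h2 : SL2Equiv g h) :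
    SL2Equiv f h := by
  obtain ⟨U, hU⟩ := h1
  obtain ⟨W, hW⟩ := h2
  refine ⟨U * W, ?_⟩
  rw [Matrix.SpecialLinearGroup.coe_mul, ← hW, ← hU]
  exact mul_conj _ _ _

lemma bqfTranslate (a b c k : ℤ) :
    SL2Equiv (a, b, c) (a, b + 2*a*k, a*k^2 + b*k + c) :=
  sl2equiv_of 1 k 0 1 (by ring) (by ring) (by ring) (by ring)

lemma bqfRot (a b c : ℤ) : SL2Equiv (a, b, c) (c, -b, a) :=
  sl2equiv_of 0 (-1) 1 0 (by ring) (by ring) (by ring) (by ring)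

lemma posdef_eval {a b c : ℤ} (pd : PosDefBQF a b c) (x y : ℤ) (h : ¬(x = 0 ∧ y = 0)) :
    0 < a*x^2 + b*x*y + c*y^2 := by
  have h' : ¬((x : ℚ) = 0 ∧ (y : ℚ) = 0) := by
    push_neg at h ⊢
    intro hx
    have : x = 0 := by exact_mod_cast hx
    have := h this
    exact_mod_cast this
  have := pd x y h'
  have : ((a*x^2 + b*x*y + c*y^2 : ℤ) : ℚ) > 0 := by push_cast; linarith
  exact_mod_cast this

lemma posdef_of {a b c : ℤ} (ha : 0 < a) (hd : b^2 - 4*a*c < 0) : PosDefBQF a b c := by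
  intro x y hxy
  have ha' : (0:ℚ) < (a:ℚ) := by exact_mod_cast ha
  have hd' : (b:ℚ)^2 - 4*(a:ℚ)*(c:ℚ) < 0 := by exact_mod_cast hd
  rcases eq_or_ne y 0 with hy | hy
  · subst hy
    have hx : x ≠ 0 := by tauto
    have : 0 < x^2 := by positivity
    nlinarith
  · have hy2 : 0 < y^2 := by positivity
    nlinarith [sq_nonneg (2*(a:ℚ)*x + (b:ℚ)*y)]

lemma disc_transform (a b c r s t u : ℤ) :
    (2*a*r*s + b*(r*u + s*t) + 2*c*t*u)^2
      - 4*(a*r^2 + b*r*t + c*t^2)*(a*s^2 + b*s*u + c*u^2)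
      = (r*u - s*t)^2 * (b^2 - 4*a*c) := by ring

lemma step (a b c r s t : ℤ) (pd : PosDefBQF a b c)
    (hr : r ≠ -1) (hdet : r^2 + s*t = 1)
    (hA : (!![r, s; t, -r])ᵀ * _root_.gram a b c * !![r, s; t, -r] = _root_.gram a b c) :
    ∃ A B C σ : ℤ, SL2Equiv (a, b, c) (A, B, C) ∧ B = A*σ ∧
      B^2 - 4*A*C = b^2 - 4*a*c ∧ 0 < A := by
  have hr1 : r + 1 ≠ 0 := fun h => hr (by omega)
  have hdpos : 0 < Int.gcd (r+1) t := by rw [Int.gcd_pos_iff]; left; exact hr1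
  set d : ℤ := (Int.gcd (r+1) t : ℤ) with hd_def
  have hd0 : d ≠ 0 := Int.natCast_ne_zero.mpr hdpos.ne'
  set v₁ : ℤ := (r+1) / d with hv₁_def
  set v₂ : ℤ := t / d with hv₂_def
  have hv₁ : d * v₁ = r + 1 := Int.mul_ediv_cancel' (Int.gcd_dvd_left _ _)
  have hv₂ : d * v₂ = t := Int.mul_ediv_cancel' (Int.gcd_dvd_right _ _)
  have hcop : Int.gcd v₁ v₂ = 1 := Int.gcd_div_gcd_div_gcd hdpos
  obtain ⟨x, y, hxy⟩ := Int.isCoprime_iff_gcd_eq_one.mpr hcop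
  have H2 : r*v₁ + s*v₂ = v₁ :=
    mul_left_cancel₀ hd0 (by linear_combination r*hv₁ + s*hv₂ - hv₁ + hdet)
  have H3 : t*v₁ - r*v₂ = v₂ :=
    mul_left_cancel₀ hd0 (by linear_combination t*hv₁ - r*hv₂ - hv₂)
  have hv₁0 : v₁ ≠ 0 := by
    intro h
    apply hr1; rw [← hv₁, h, mul_zero]
  set U : Matrix (Fin 2) (Fin 2) ℤ := !![r, s; t, -r] with hU_def
  set V : Matrix (Fin 2) (Fin 2) ℤ := !![v₁, -y; v₂, x] with hV_def
  set W : Matrix (Fin 2) (Fin 2) ℤ := !![x, y; -v₂, v₁] with hW_def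
  set σ : ℤ := s*x^2 - t*y^2 - 2*r*x*y with hσ_def
  set M : Matrix (Fin 2) (Fin 2) ℤ := !![1, σ; 0, -1] with hM_def
  have hVW : V * W = 1 := by
    ext i j
    fin_cases i <;> fin_cases j <;>
      simp [hV_def, hW_def, Matrix.mul_apply, Fin.sum_univ_two, Matrix.vecHead,
        Matrix.vecTail, Matrix.one_apply]
    · linear_combination hxy
    · ring
    · ring
    · linear_combination hxy
  have hWV : W * V = 1 := by
    ext i j
    fin_cases i <;> fin_cases j <;>
      simp [hV_def, hW_def, Matrix.mul_apply, Fin.sum_univ_two, Matrix.vecHead,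
        Matrix.vecTail, Matrix.one_apply]
    · linear_combination hxy
    · ring
    · ring
    · linear_combination hxy
  have hUV : U * V = V * M := by
    ext i j
    fin_cases i <;> fin_cases j <;>
      simp [hU_def, hV_def, hM_def, Matrix.mul_apply, Fin.sum_univ_two,
        Matrix.vecHead, Matrix.vecTail]
    · linear_combination H2
    · linear_combination (y - s*x + r*y)*hxy + (x*y)*H2 + (y^2)*H3 + (-v₁)*hσ_def
    · linear_combination H3
    · linear_combination (-x + t*y + r*x)*hxy + (-x^2)*H2 + (-x*y)*H3 + (-v₂)*hσ_def
  have hWtVt : Wᵀ * Vᵀ = 1 := by rw [← Matrix.transpose_mul, hVW, Matrix.transpose_one]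
  have hM2 : M = W * U * V := by
    rw [Matrix.mul_assoc, hUV, ← Matrix.mul_assoc, hWV, Matrix.one_mul]
  refine ⟨a*v₁^2 + b*v₁*v₂ + c*v₂^2,
          2*a*v₁*(-y) + b*(v₁*x + (-y)*v₂) + 2*c*v₂*x,
          a*(-y)^2 + b*(-y)*x + c*x^2, σ, ?_, ?_, ?_, ?_⟩
  · exact sl2equiv_of v₁ (-y) v₂ x (by linear_combination hxy) rfl rfl rfl
  · have hGA := transform a b c v₁ (-y) v₂ x
    have hsand : Mᵀ * (Vᵀ * _root_.gram a b c * V) * M = Vᵀ * _root_.gram a b c * V := by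
      calc Mᵀ * (Vᵀ * _root_.gram a b c * V) * M
          = Vᵀ * (Uᵀ * ((Wᵀ * Vᵀ) * _root_.gram a b c * (V * W)) * U) * V := by
            rw [hM2]; simp only [Matrix.transpose_mul, Matrix.mul_assoc]
        _ = Vᵀ * (Uᵀ * _root_.gram a b c * U) * V := by
            rw [hWtVt, hVW, Matrix.one_mul, Matrix.mul_one]
        _ = Vᵀ * _root_.gram a b c * V := by rw [hA]
    rw [hGA, hM_def, transform] at hsand
    obtain ⟨-, h2, -⟩ := gram_inj hsand
    have h2' : (2:ℤ) * (2*a*v₁*(-y) + b*(v₁*x + (-y)*v₂) + 2*c*v₂*x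
        - (a*v₁^2 + b*v₁*v₂ + c*v₂^2)*σ) = 2 * 0 := by linear_combination -h2
    have := mul_left_cancel₀ (two_ne_zero) h2'
    linarith
  · linear_combination (b^2 - 4*a*c) * (x*v₁ + y*v₂ + 1) * hxy
  · exact posdef_eval pd v₁ v₂ (by tauto)

lemma key (p : ℕ) (hp : p.Prime) (h4 : p % 4 = 3) (q A B C σ : ℤ)
    (hq : (p:ℤ) + 1 = 4*q) (hA : 0 < A) (hB : B = A*σ)
    (hdisc : B^2 - 4*A*C = -(p:ℤ)) :
    SL2Equiv (A, B, C) (1, 1, q) := by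
  rcases Int.even_or_odd σ with ⟨k, hk⟩ | ⟨k, hk⟩
  · -- σ even : impossible
    exfalso
    have hB2 : B = 2*A*k := by rw [hB, hk]; ring
    have h44 : (4:ℤ) ∣ (p:ℤ) := ⟨A*C - A^2*k^2, by linear_combination hdisc - (B + 2*A*k)*hB2⟩
    have : (4:ℕ) ∣ p := by exact_mod_cast h44
    omega
  · -- σ = 2k+1
    have hBk : B = 2*A*k + A := by rw [hB, hk]; ring
    have h1 := bqfTranslate A B C (-k)
    have e1 : B + 2*A*(-k) = A := by linear_combination hBk
    rw [e1] at h1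
    set C' : ℤ := A*(-k)^2 + B*(-k) + C with hC'
    have hdisc' : A^2 - 4*A*C' = -(p:ℤ) := by
      rw [hC']; linear_combination hdisc - (B - 2*A*k + A)*hBk
    have hfac : A * (4*C' - A) = (p:ℤ) := by linear_combination -hdisc'
    have hA1 : A = 1 ∨ A = (p:ℤ) := by
      have hd : A ∣ (p:ℤ) := ⟨4*C' - A, hfac.symm⟩
      have : A.natAbs ∣ p := by
        rwa [Int.natAbs_dvd_natAbs.symm, Int.natAbs_natCast] at hd
      rcases (Nat.Prime.eq_one_or_self_of_dvd hp _ this) with h | h <;> [left; right] <;> omega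
    rcases hA1 with h | h
    · -- A = 1 : (1,1,q) directly
      rw [h] at h1 hdisc'
      have : C' = q := by linarith
      rw [this] at h1
      rw [h]
      exact h1
    · -- A = p : form (p,p,q), chain down
      rw [h] at h1 hfac
      have hp0 : (p:ℤ) ≠ 0 := by exact_mod_cast hp.ne_zero
      have h4C : 4*C' - (p:ℤ) = 1 := by
        have := mul_left_cancel₀ hp0 (by linear_combination hfac : (p:ℤ) * (4*C' - (p:ℤ)) = (p:ℤ) * 1)
        exact this
      have hC'q : C' = q := by linarith
      rw [hC'q] at h1
      -- h1 : SL2Equiv (A,B,C) (p, p, q)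
      have h2 := bqfRot (p:ℤ) (p:ℤ) q
      have h3 := bqfTranslate q (-(p:ℤ)) (p:ℤ) 2
      have e2 : -(p:ℤ) + 2*q*2 = 1 := by linarith
      have e3 : q*2^2 + -(p:ℤ)*2 + (p:ℤ) = 1 := by linarith
      rw [e2, e3] at h3
      have h5 := bqfRot q 1 1
      have h6 := bqfTranslate 1 (-1) q 1
      have e4 : (-1:ℤ) + 2*1*1 = 1 := by ring
      have e5 : (1:ℤ)*1^2 + (-1)*1 + q = q := by ring
      rw [e4, e5] at h6
      rw [h]
      exact sl2equiv_trans h1 (sl2equiv_trans h2 (sl2equiv_trans h3 (sl2equiv_trans h5 h6)))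

/-- For a prime `p ≡ 3 (mod 4)`, `p > 3`, the set `B_{-p}/SL(2,ℤ)` contains exactly
one ambiguous class. -/
theorem unique_ambiguous_class (p : ℕ) (hp : p.Prime) (h4 : p % 4 = 3) (h3 : 3 < p) :
    ∃ f : ℤ × ℤ × ℤ, InBD p f ∧ Ambiguous f ∧
      ∀ g : ℤ × ℤ × ℤ, InBD p g → Ambiguous g → SL2Equiv f g := by
  obtain ⟨q, hq⟩ : ∃ q : ℤ, (p:ℤ) + 1 = 4*q :=
    ⟨((p/4 : ℕ) : ℤ) + 1, by have := Nat.div_add_mod p 4; push_cast; omega⟩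
  have hp3 : (3:ℤ) < (p:ℤ) := by exact_mod_cast h3
  refine ⟨(1, 1, q), ⟨?_, ?_⟩, ?_, ?_⟩
  · exact posdef_of one_pos (by show (1:ℤ)^2 - 4*1*q < 0; linarith)
  · show (1:ℤ)^2 - 4*1*q = -(p:ℤ)
    linarith
  · refine ⟨!![1, 1; 0, -1], by rw [Matrix.det_fin_two_of]; ring, ?_⟩
    show (!![(1:ℤ), 1; 0, -1])ᵀ * _root_.gram 1 1 q * !![(1:ℤ), 1; 0, -1] = _root_.gram 1 1 q
    exact transform' (by ring) (by ring) (by ring)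
  · rintro ⟨a, b, c⟩ hg hamb
    have pd : PosDefBQF a b c := hg.1
    have hdisc : b^2 - 4*a*c = -(p:ℤ) := hg.2
    obtain ⟨U, hUdet, hUA⟩ := hamb
    set r := U 0 0 with hr_def
    set s := U 0 1 with hs_def
    set t := U 1 0 with ht_def
    set u := U 1 1 with hu_def
    have hU : U = !![r, s; t, u] := Matrix.eta_fin_two U
    rw [hU] at hUdet hUA
    rw [Matrix.det_fin_two_of] at hUdet
    have hUA' := hUA
    rw [transform] at hUA'
    obtain ⟨E1, E2, E3⟩ := gram_inj hUA'
    have a_pos : 0 < a := by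
      have := posdef_eval pd 1 0 (by norm_num)
      simpa using this
    have h2a : 2*(a*(r+u)) = 0 := by
      linear_combination (-2*u)*E1 + t*E2 + (b*t + 2*a*r)*hUdet
    have hu : u = -r := by
      have h0 : a*(r+u) = 0 :=
        mul_left_cancel₀ (two_ne_zero) (by linarith : (2:ℤ)*(a*(r+u)) = 2*0)
      rcases mul_eq_zero.mp h0 with h | h
      · exact absurd h a_pos.ne'
      · linarith
    rw [hu] at hUA hUdet
    have hdet1 : r^2 + s*t = 1 := by linear_combination -hUdet
    obtain ⟨r', s', t', hr', hdet', hA'⟩ :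
        ∃ r' s' t' : ℤ, r' ≠ -1 ∧ r'^2 + s'*t' = 1 ∧
          (!![r', s'; t', -r'])ᵀ * _root_.gram a b c * !![r', s'; t', -r'] = _root_.gram a b c := by
      rcases eq_or_ne r (-1) with h | h
      · refine ⟨-r, -s, -t, by omega, by linear_combination hdet1, ?_⟩
        have hneg : !![(-r), (-s); (-t), -(-r)] = -(!![r, s; t, -r]) := by
          ext i j; fin_cases i <;> fin_cases j <;> simp
        rw [hneg]
        simp only [Matrix.transpose_neg, Matrix.neg_mul, Matrix.mul_neg, neg_neg]
        exact hUA
      · exact ⟨r, s, t, h, hdet1, hUA⟩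
    obtain ⟨A, B, C, σ, heq, hBσ, hdiscAB, hApos⟩ := step a b c r' s' t' pd hr' hdet' hA'
    have hdiscP : B^2 - 4*A*C = -(p:ℤ) := by rw [hdiscAB]; exact hdisc
    have hk := key p hp h4 q A B C σ hq hApos hBσ hdiscP
    exact sl2equiv_trans (sl2equiv_symm hk) (sl2equiv_symm heq)
end
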